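/- For any positive integer k, Σ_{i+t ≤ ⌊k/2⌋} B_{2t} · 2^{2t} · (2k+2)! / ((2t)! (2i+1)! (2k-2t-2i+1)!) = (k+1) · (2^{2k} + (-1)^k · C(2k, k)), where the sum ranges over all nonnegative integers i, t with i + t ≤ ⌊k/2⌋. -/

import Mathlib

namespace BernoulliTrinomialAux

open Nat Finset PowerSeries

noncomputable def Q : ℚ⟦X⟧ := rescale (2:ℚ) (bernoulliPowerSeries ℚ)

lemma rescale_X : rescale (2:ℚ) (X : ℚ⟦X⟧) = C (2:ℚ) * X := by
  ext n
  rw [coeff_rescale, coeff_C_mul]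
  rcases n with _|_|n <;> simp [coeff_X]

lemma expsq_ne : (exp ℚ)^2 - 1 ≠ 0 := by
  intro h
  have h1 := congrArg (coeff 1) h
  rw [exp_pow_eq_rescale_exp] at h1
  simp [coeff_rescale, coeff_exp, coeff_one] at h1

lemma key : Q * exp ℚ = 2 * bernoulliPowerSeries ℚ - Q := by
  have h := bernoulliPowerSeries_mul_exp_sub_one ℚ
  have h2 : Q * ((exp ℚ)^2 - 1) = C (2:ℚ) * X := by
    have h3 := congrArg (rescale (2:ℚ)) h
    rw [map_mul, map_sub, map_one, rescale_X] at h3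
    rw [exp_pow_eq_rescale_exp]
    push_cast
    exact h3
  have hC : C (2:ℚ) = (2 : ℚ⟦X⟧) := map_ofNat (C (R := ℚ)) 2
  apply mul_right_cancel₀ expsq_ne
  linear_combination (exp ℚ + 1) * h2 - (2*(exp ℚ + 1)) * h + (X * (1 + exp ℚ)) * hC

lemma sum_choose_two_pow_bernoulli (n : ℕ) :
    ∑ j ∈ Finset.range (n+1), (n.choose j : ℚ) * 2^j * bernoulli j
      = (2 - 2^n) * bernoulli n := by
  have hfac : ∀ m : ℕ, (m ! : ℚ) ≠ 0 := fun m => by exact_mod_cast m.factorial_ne_zero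
  have hc := congrArg (coeff n) key
  rw [coeff_mul, Finset.Nat.sum_antidiagonal_eq_sum_range_succ_mk, two_mul, map_sub, map_add] at hc
  simp only [Q, coeff_rescale, bernoulliPowerSeries, coeff_mk, coeff_exp,
    Algebra.algebraMap_self, RingHom.id_apply, one_div] at hc
  have hgoal : ∑ j ∈ Finset.range (n+1), (n.choose j : ℚ) * 2^j * bernoulli j
      = (n ! : ℚ) * ∑ j ∈ Finset.range (n+1), 2 ^ j * (bernoulli j / j !) * ((n - j)! : ℚ)⁻¹ := by
    rw [Finset.mul_sum]
    refine Finset.sum_congr rfl fun j hj => ?_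
    rw [Nat.cast_choose ℚ (Finset.mem_range_succ_iff.mp hj)]
    field_simp
  rw [hgoal, hc]
  field_simp
  ring

lemma bernoulli_odd_zero {m : ℕ} (hm : 1 ≤ m) : bernoulli (2*m+1) = 0 := by
  rw [bernoulli_eq_bernoulli'_of_ne_one (by omega), bernoulli'_eq_zero_of_odd ⟨m, by ring⟩ (by omega)]

lemma sum_range_two_mul (f : ℕ → ℚ) (n : ℕ) :
    ∑ j ∈ Finset.range (2*n), f j = ∑ t ∈ Finset.range n, (f (2*t) + f (2*t+1)) := by
  induction n with
  | zero => simp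
  | succ n ih =>
      rw [Finset.sum_range_succ, ← ih, show 2*(n+1) = (2*n+1)+1 by ring,
        Finset.sum_range_succ, Finset.sum_range_succ]
      ring

lemma bern_even_sum (m : ℕ) :
    ∑ t ∈ Finset.range (m+1), ((2*m+1).choose (2*t) : ℚ) * 2^(2*t) * bernoulli (2*t)
      = 2*m+1 := by
  have h := sum_choose_two_pow_bernoulli (2*m+1)
  rw [show 2*m+1+1 = 2*(m+1) by ring, sum_range_two_mul] at h
  have hodd : ∑ t ∈ Finset.range (m+1),
      ((2*m+1).choose (2*t+1) : ℚ) * 2^(2*t+1) * bernoulli (2*t+1) = -(2*m+1) := by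
    rw [Finset.sum_range_succ'] -- splits off t = 0
    have : ∀ t ∈ Finset.range m,
        ((2*m+1).choose (2*(t+1)+1) : ℚ) * 2^(2*(t+1)+1) * bernoulli (2*(t+1)+1) = 0 := by
      intro t _
      rw [bernoulli_odd_zero (by omega), mul_zero]
    rw [Finset.sum_congr rfl this]
    simp [bernoulli_one]
    ring
  have hrhs : ((2:ℚ) - 2^(2*m+1)) * bernoulli (2*m+1) = 0 := by
    rcases Nat.eq_zero_or_pos m with rfl | hm
    · norm_num
    · rw [bernoulli_odd_zero hm, mul_zero]
  rw [Finset.sum_add_distrib, hodd, hrhs] at h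
  linarith [h]

lemma even_partial_sum (k n : ℕ) :
    ∑ m ∈ Finset.range (n+1), (2*k+1).choose (2*m)
      = ∑ j ∈ Finset.range (2*n+1), (2*k).choose j := by
  induction n with
  | zero => simp
  | succ n ih =>
      have h2 : ∑ j ∈ Finset.range (2*(n+1)+1), (2*k).choose j
          = ∑ j ∈ Finset.range (2*n+1), (2*k).choose j
              + (2*k).choose (2*n+1) + (2*k).choose (2*n+1+1) := by
        rw [show 2*(n+1)+1 = (2*n+1)+1+1 by ring,
          Finset.sum_range_succ (fun j => (2*k).choose j) ((2*n+1)+1),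
          Finset.sum_range_succ (fun j => (2*k).choose j) (2*n+1)]
      rw [Finset.sum_range_succ (fun m => (2*k+1).choose (2*m)) (n+1), ih, h2,
        show 2*(n+1) = (2*n+1)+1 by ring, Nat.choose_succ_succ' (2*k) (2*n+1)]
      omega

lemma half_sum_choose (k : ℕ) :
    2 * (∑ j ∈ Finset.range k, (2*k).choose j) + (2*k).choose k = 2^(2*k) := by
  have total := Nat.sum_range_choose (2*k)
  rw [show 2*k+1 = (k+1)+k by ring, Finset.sum_range_add, Finset.sum_range_succ] at total
  have hrefl : ∑ j ∈ Finset.range k, (2*k).choose (k+1+j)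
      = ∑ j ∈ Finset.range k, (2*k).choose j := by
    rw [← Finset.sum_range_reflect (fun j => (2*k).choose (k+1+j)) k]
    refine Finset.sum_congr rfl fun j hj => ?_
    have hj' : j < k := Finset.mem_range.mp hj
    rw [show k+1+(k-1-j) = 2*k - j by omega, Nat.choose_symm (by omega)]
  rw [hrefl] at total
  omega

lemma choose_even_partial (k : ℕ) :
    2 * (∑ m ∈ Finset.range (k/2+1), ((2*k+1).choose (2*m) : ℚ))
      = 2^(2*k) + (-1)^k * ((2*k).choose k : ℚ) := by
  have hFq : 2 * ((∑ j ∈ Finset.range k, (2*k).choose j : ℕ) : ℚ) + ((2*k).choose k : ℚ)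
      = 2^(2*k) := by exact_mod_cast half_sum_choose k
  rcases Nat.even_or_odd k with ⟨s, hs⟩ | ⟨s, hs⟩
  · have hdiv : k/2 = s := by omega
    have hE : ∑ m ∈ Finset.range (s+1), (2*k+1).choose (2*m)
        = ∑ j ∈ Finset.range k, (2*k).choose j + (2*k).choose k := by
      rw [even_partial_sum k s, show 2*s+1 = k+1 by omega,
        Finset.sum_range_succ (fun j => (2*k).choose j) k]
    rw [hdiv, show (∑ m ∈ Finset.range (s+1), ((2*k+1).choose (2*m) : ℚ))
        = ((∑ m ∈ Finset.range (s+1), (2*k+1).choose (2*m) : ℕ) : ℚ) by push_cast; ring,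
      hE, Even.neg_one_pow ⟨s, hs⟩]
    push_cast
    push_cast at hFq
    linarith
  · have hdiv : k/2 = s := by omega
    have hE : ∑ m ∈ Finset.range (s+1), (2*k+1).choose (2*m)
        = ∑ j ∈ Finset.range k, (2*k).choose j := by
      rw [even_partial_sum k s, show 2*s+1 = k by omega]
    rw [hdiv, show (∑ m ∈ Finset.range (s+1), ((2*k+1).choose (2*m) : ℚ))
        = ((∑ m ∈ Finset.range (s+1), (2*k+1).choose (2*m) : ℕ) : ℚ) by push_cast; ring,
      hE, Odd.neg_one_pow ⟨s, by omega⟩]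
    push_cast
    push_cast at hFq
    linarith

lemma triangle_sum (f : ℕ → ℕ → ℚ) (n : ℕ) :
    ∑ t ∈ Finset.range (n+1), ∑ i ∈ Finset.range (n - t + 1), f t i
      = ∑ m ∈ Finset.range (n+1), ∑ t ∈ Finset.range (m+1), f t (m - t) := by
  induction n with
  | zero => simp
  | succ n ih =>
    have step : ∀ t ∈ Finset.range (n+1), ∑ i ∈ Finset.range (n+1-t+1), f t i
        = ∑ i ∈ Finset.range (n-t+1), f t i + f t (n+1-t) := by
      intro t ht
      have ht' : t ≤ n := Finset.mem_range_succ_iff.mp ht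
      rw [show n+1-t+1 = (n-t+1)+1 by omega, Finset.sum_range_succ,
        show n-t+1 = n+1-t by omega]
    calc ∑ t ∈ Finset.range (n+1+1), ∑ i ∈ Finset.range (n+1-t+1), f t i
        = (∑ t ∈ Finset.range (n+1), (∑ i ∈ Finset.range (n-t+1), f t i + f t (n+1-t)))
            + ∑ i ∈ Finset.range (n+1-(n+1)+1), f (n+1) i := by
          rw [Finset.sum_range_succ (fun t => ∑ i ∈ Finset.range (n+1-t+1), f t i) (n+1),
            Finset.sum_congr rfl step]
      _ = (∑ t ∈ Finset.range (n+1), ∑ i ∈ Finset.range (n-t+1), f t i)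
            + (∑ t ∈ Finset.range (n+1+1), f t (n+1-t)) := by
          rw [Finset.sum_add_distrib, Finset.sum_range_succ (fun t => f t (n+1-t)) (n+1)]
          simp [Nat.sub_self]
          ring
      _ = ∑ m ∈ Finset.range (n+1+1), ∑ t ∈ Finset.range (m+1), f t (m - t) := by
          rw [Finset.sum_range_succ (fun m => ∑ t ∈ Finset.range (m+1), f t (m-t)) (n+1), ih]


end BernoulliTrinomialAux

open Nat Finset BernoulliTrinomialAux in
theorem bernoulli_trinomial_identity (k : ℕ) (hk : 0 < k) :
    ∑ t ∈ Finset.range (k / 2 + 1), ∑ i ∈ Finset.range (k / 2 - t + 1),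
        (bernoulli (2 * t) : ℚ) * 2 ^ (2 * t) *
          ((2 * k + 2).factorial : ℚ) /
            (((2 * t).factorial : ℚ) * ((2 * i + 1).factorial : ℚ) *
              ((2 * k - 2 * t - 2 * i + 1).factorial : ℚ)) =
      (k + 1) * (2 ^ (2 * k) + (-1) ^ k * ((2 * k).choose k : ℚ)) := by
  have hfac : ∀ m : ℕ, (m ! : ℚ) ≠ 0 := fun m => by exact_mod_cast m.factorial_ne_zero
  rw [triangle_sum (fun t i => (bernoulli (2 * t) : ℚ) * 2 ^ (2 * t) *
          ((2 * k + 2).factorial : ℚ) /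
            (((2 * t).factorial : ℚ) * ((2 * i + 1).factorial : ℚ) *
              ((2 * k - 2 * t - 2 * i + 1).factorial : ℚ))) (k/2)]
  have hkk : k/2 ≤ k := Nat.div_le_self k 2
  have hinner : ∀ m ∈ Finset.range (k/2 + 1),
      ∑ t ∈ Finset.range (m+1), (bernoulli (2 * t) : ℚ) * 2 ^ (2 * t) *
          ((2 * k + 2).factorial : ℚ) /
            (((2 * t).factorial : ℚ) * ((2 * (m - t) + 1).factorial : ℚ) *
              ((2 * k - 2 * t - 2 * (m - t) + 1).factorial : ℚ))
        = (2*(k:ℚ)+2) * ((2*k+1).choose (2*m) : ℚ) := by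
    intro m hm
    have hm' : m ≤ k/2 := Finset.mem_range_succ_iff.mp hm
    have hmk : m ≤ k := le_trans hm' hkk
    have stepA : ∀ t ∈ Finset.range (m+1),
        (bernoulli (2 * t) : ℚ) * 2 ^ (2 * t) *
          ((2 * k + 2).factorial : ℚ) /
            (((2 * t).factorial : ℚ) * ((2 * (m - t) + 1).factorial : ℚ) *
              ((2 * k - 2 * t - 2 * (m - t) + 1).factorial : ℚ))
          = ((2*m+1).choose (2*t) : ℚ) * 2^(2*t) * bernoulli (2*t) *
              (((2*k+2).factorial : ℚ) / (((2*m+1).factorial : ℚ) * ((2*(k-m)+1).factorial : ℚ))) := by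
      intro t ht
      have ht' : t ≤ m := Finset.mem_range_succ_iff.mp ht
      rw [show 2*k - 2*t - 2*(m-t) + 1 = 2*(k-m)+1 by omega,
        Nat.cast_choose ℚ (show 2*t ≤ 2*m+1 by omega),
        show 2*m+1 - 2*t = 2*(m-t)+1 by omega]
      field_simp
    rw [Finset.sum_congr rfl stepA, ← Finset.sum_mul, bern_even_sum m,
      Nat.cast_choose ℚ (show 2*m ≤ 2*k+1 by omega),
      show 2*k+1 - 2*m = 2*(k-m)+1 by omega,
      show (2*k+2)! = (2*k+2) * (2*k+1)! from Nat.factorial_succ (2*k+1),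
      show (2*m+1)! = (2*m+1) * (2*m)! from Nat.factorial_succ (2*m)]
    push_cast
    field_simp
  rw [Finset.sum_congr rfl hinner, ← Finset.mul_sum]
  have hG := choose_even_partial k
  push_cast
  push_cast at hG
  nlinarith [hG]
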